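/- Existence of nontrivial messages hashing to zero under LFSR-based Toeplitz hashing for every initial state (core of Lemma 3): let b_H ≥ 1 and b_M > b_H be natural numbers and let p ∈ (ZMod 2)[X] be a monic polynomial of degree b_H with coefficients p_i (i < b_H). Then there exists a nonzero polynomial m ∈ (ZMod 2)[X] of degree at most b_M such that for every sequence s : ℕ → ZMod 2 satisfying s(l + b_H) = ∑_{i=0}^{b_H-1} p_i · s(l + i) for all l, and for every shift k ∈ ℕ, one has ∑_{i=0}^{deg m} m_i · s(k + i) = 0, where m_i is the coefficient of X^i in m. In particular, m can be chosen as m = p·g for any nonzero g of degree b_M − b_H. -/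

import Mathlib

open Polynomial Finset

lemma lfsr_key (bH : ℕ) (p : Polynomial (ZMod 2)) (hmonic : p.Monic)
    (hdeg : p.natDegree = bH) (s : ℕ → ZMod 2)
    (hs : ∀ l : ℕ, s (l + bH) = ∑ i ∈ Finset.range bH, p.coeff i * s (l + i))
    (c : ZMod 2) (j k N : ℕ) (hN : j + bH + 1 ≤ N) :
    ∑ i ∈ Finset.range N, (Polynomial.C c * Polynomial.X ^ j * p).coeff i * s (k + i) = 0 := by
  have hcoeff : ∀ i, (Polynomial.C c * Polynomial.X ^ j * p).coeff i
      = if j ≤ i then c * p.coeff (i - j) else 0 := by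
    intro i
    rw [mul_comm (Polynomial.C c * Polynomial.X ^ j) p, ← mul_assoc,
      Polynomial.coeff_mul_X_pow', Polynomial.coeff_mul_C]
    split <;> ring_nf <;> simp [mul_comm]
  have hsplit : ∑ i ∈ Finset.range N, (Polynomial.C c * Polynomial.X ^ j * p).coeff i * s (k + i)
      = ∑ a ∈ Finset.range (N - j), c * p.coeff a * s (k + j + a) := by
    rw [Finset.range_eq_Ico, ← Finset.sum_Ico_consecutive _ (Nat.zero_le j) (by omega : j ≤ N)]
    have h1 : ∑ i ∈ Finset.Ico 0 j, (Polynomial.C c * Polynomial.X ^ j * p).coeff i * s (k + i) = 0 := by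
      apply Finset.sum_eq_zero
      intro i hi
      simp only [Finset.mem_Ico] at hi
      rw [hcoeff, if_neg (by omega)]; ring
    rw [h1, zero_add]
    rw [Finset.sum_Ico_eq_sum_range, Finset.range_eq_Ico]
    apply Finset.sum_congr rfl
    intro a _
    rw [hcoeff, if_pos (Nat.le_add_right j a), Nat.add_sub_cancel_left, ← Nat.add_assoc]
  rw [hsplit]
  have htrunc : ∑ a ∈ Finset.range (N - j), c * p.coeff a * s (k + j + a)
      = ∑ a ∈ Finset.range (bH + 1), c * p.coeff a * s (k + j + a) := by
    apply (Finset.sum_subset (by intro a ha; simp only [Finset.mem_range] at *; omega) _).symm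
    intro a _ ha
    simp only [Finset.mem_range, not_lt] at ha
    have : p.coeff a = 0 := Polynomial.coeff_eq_zero_of_natDegree_lt (by omega)
    simp [this]
  rw [htrunc, Finset.sum_range_succ]
  have hlead : p.coeff bH = 1 := by rw [← hdeg]; exact hmonic
  have hrec := hs (k + j)
  have : ∑ a ∈ Finset.range bH, c * p.coeff a * s (k + j + a)
      = c * s (k + j + bH) := by
    rw [hrec, Finset.mul_sum]
    apply Finset.sum_congr rfl
    intro a _; ring
  rw [this, hlead]
  have h2 : (2 : ZMod 2) = 0 := by decide
  ring_nf
  rw [h2, mul_zero]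

lemma lfsr_mul (bH : ℕ) (p : Polynomial (ZMod 2)) (hmonic : p.Monic)
    (hdeg : p.natDegree = bH) (g : Polynomial (ZMod 2)) (s : ℕ → ZMod 2)
    (hs : ∀ l : ℕ, s (l + bH) = ∑ i ∈ Finset.range bH, p.coeff i * s (l + i))
    (k N : ℕ) (hN : g.natDegree + bH + 1 ≤ N) :
    ∑ i ∈ Finset.range N, (p * g).coeff i * s (k + i) = 0 := by
  have hg : p * g = ∑ j ∈ g.support, Polynomial.C (g.coeff j) * Polynomial.X ^ j * p := by
    conv_lhs => rw [g.as_sum_support, Finset.mul_sum]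
    apply Finset.sum_congr rfl
    intro j _
    rw [Polynomial.C_mul_X_pow_eq_monomial]
    ring
  rw [hg]
  have : ∀ i, (∑ j ∈ g.support, Polynomial.C (g.coeff j) * Polynomial.X ^ j * p).coeff i
      = ∑ j ∈ g.support, (Polynomial.C (g.coeff j) * Polynomial.X ^ j * p).coeff i := by
    intro i; exact Polynomial.finset_sum_coeff _ _ _
  simp_rw [this, Finset.sum_mul]
  rw [Finset.sum_comm]
  apply Finset.sum_eq_zero
  intro j hj
  exact lfsr_key bH p hmonic hdeg s hs (g.coeff j) j k N
    (by have := Polynomial.le_natDegree_of_mem_supp j hj; omega)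

theorem lfsr_toeplitz_forgery (bH bM : ℕ) (hbH : 1 ≤ bH) (hbM : bH < bM)
    (p : Polynomial (ZMod 2)) (hmonic : p.Monic) (hdeg : p.natDegree = bH) :
    (∃ m : Polynomial (ZMod 2), m ≠ 0 ∧ m.natDegree ≤ bM ∧
      ∀ s : ℕ → ZMod 2,
        (∀ l : ℕ, s (l + bH) = ∑ i ∈ Finset.range bH, p.coeff i * s (l + i)) →
        ∀ k : ℕ, ∑ i ∈ Finset.range (m.natDegree + 1), m.coeff i * s (k + i) = 0) ∧
    (∀ g : Polynomial (ZMod 2), g ≠ 0 → g.natDegree = bM - bH →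
      p * g ≠ 0 ∧ (p * g).natDegree ≤ bM ∧
      ∀ s : ℕ → ZMod 2,
        (∀ l : ℕ, s (l + bH) = ∑ i ∈ Finset.range bH, p.coeff i * s (l + i)) →
        ∀ k : ℕ, ∑ i ∈ Finset.range ((p * g).natDegree + 1),
          (p * g).coeff i * s (k + i) = 0) := by
  have hmain : ∀ g : Polynomial (ZMod 2), g ≠ 0 → g.natDegree = bM - bH →
      p * g ≠ 0 ∧ (p * g).natDegree ≤ bM ∧
      ∀ s : ℕ → ZMod 2,
        (∀ l : ℕ, s (l + bH) = ∑ i ∈ Finset.range bH, p.coeff i * s (l + i)) →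
        ∀ k : ℕ, ∑ i ∈ Finset.range ((p * g).natDegree + 1),
          (p * g).coeff i * s (k + i) = 0 := by
    intro g hg hgdeg
    have hne : p * g ≠ 0 := mul_ne_zero hmonic.ne_zero hg
    have hdeg' : (p * g).natDegree = bH + (bM - bH) := by
      rw [hmonic.natDegree_mul' hg, hdeg, hgdeg]
    refine ⟨hne, by omega, ?_⟩
    intro s hs k
    exact lfsr_mul bH p hmonic hdeg g s hs k _ (by omega)
  refine ⟨?_, hmain⟩
  obtain ⟨hne, hle, hzero⟩ := hmain (Polynomial.X ^ (bM - bH))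
    (pow_ne_zero _ Polynomial.X_ne_zero) (Polynomial.natDegree_X_pow _)
  exact ⟨p * Polynomial.X ^ (bM - bH), hne, hle, hzero⟩
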